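/- The quaternionic cosine function cos : ℍ → ℍ is H-differentiable at every point z ∈ ℍ with H-derivative −sin z. -/

import Mathlib

open scoped Quaternion
open Filter Topology

/-- A function `f : ℍ → ℍ` is H-differentiable at `z₀` with H-derivative `d` if there exist
sequences of quaternions `A, B` with `∑ ‖A k‖ * ‖B k‖ < ∞` such that
`f (z₀ + h) - f z₀ = ∑' k, A k * h * B k + ω h` with `‖ω h‖ / ‖h‖ → 0` as `h → 0`,
and `d = ∑' k, A k * B k`. -/
def HDiffAt (f : ℍ[ℝ] → ℍ[ℝ]) (z₀ d : ℍ[ℝ]) : Prop :=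
  ∃ A B : ℕ → ℍ[ℝ],
    (Summable fun k => ‖A k‖ * ‖B k‖) ∧
    Filter.Tendsto
      (fun h : ℍ[ℝ] => ‖f (z₀ + h) - f z₀ - ∑' k, A k * h * B k‖ / ‖h‖)
      (𝓝[≠] (0 : ℍ[ℝ])) (𝓝 0) ∧
    d = ∑' k, A k * B k

/-- The quaternionic sine, defined by its power series. -/
noncomputable def qsin (z : ℍ[ℝ]) : ℍ[ℝ] :=
  ∑' n : ℕ, ((-1 : ℝ) ^ n / (2 * n + 1).factorial) • z ^ (2 * n + 1)

/-- The quaternionic cosine, defined by its power series. -/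
noncomputable def qcos (z : ℍ[ℝ]) : ℍ[ℝ] :=
  ∑' n : ℕ, ((-1 : ℝ) ^ n / (2 * n).factorial) • z ^ (2 * n)

namespace HQC

/-- The `n`-th coefficient of the cosine power series. -/
noncomputable def c (n : ℕ) : ℝ := if n % 2 = 0 then (-1 : ℝ) ^ (n / 2) / (n.factorial : ℝ) else 0

lemma abs_c_le (n : ℕ) : |c n| ≤ 1 / (n.factorial : ℝ) := by
  unfold c
  split
  · rw [abs_div, abs_pow, abs_neg, abs_one, one_pow, abs_of_nonneg (by positivity : (0:ℝ) ≤ (n.factorial : ℝ))]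
  · rw [abs_zero]; positivity

lemma c_two_mul (m : ℕ) : c (2 * m) = (-1 : ℝ) ^ m / (2 * m).factorial := by
  unfold c
  rw [if_pos (Nat.mul_mod_right 2 m), Nat.mul_div_cancel_left m (by norm_num)]

lemma c_odd {n : ℕ} (hn : n % 2 = 1) : c n = 0 := by
  unfold c; rw [if_neg (by omega)]

lemma qcos_eq (w : ℍ[ℝ]) : qcos w = ∑' n, c n • w ^ n := by
  have h := Function.Injective.tsum_eq (g := fun m : ℕ => 2 * m)
      (f := fun n : ℕ => c n • w ^ n) (fun a b hab => by dsimp only at hab; omega) ?_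
  · rw [qcos, ← h]
    exact tsum_congr fun m => by rw [c_two_mul]
  · intro n hn
    rcases Nat.even_or_odd n with ⟨m, hm⟩ | ⟨m, hm⟩
    · exact ⟨m, by dsimp only; omega⟩
    · exfalso
      apply hn
      show c n • w ^ n = 0
      rw [c_odd (by omega), zero_smul]

/-- The polar-type linear term. -/
noncomputable def Lp (z h : ℍ[ℝ]) (n : ℕ) : ℍ[ℝ] :=
  ∑ i ∈ Finset.range n, z ^ i * h * z ^ (n - 1 - i)

lemma Lp_succ (z h : ℍ[ℝ]) (n : ℕ) : Lp z h (n + 1) = Lp z h n * z + z ^ n * h := by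
  unfold Lp
  rw [Finset.sum_range_succ]
  congr 1
  · rw [Finset.sum_mul]
    refine Finset.sum_congr rfl fun i hi => ?_
    rw [Finset.mem_range] at hi
    have h1 : n + 1 - 1 - i = (n - 1 - i) + 1 := by omega
    rw [h1, pow_succ, ← mul_assoc]
  · simp

lemma Lp_norm_le (z h : ℍ[ℝ]) (n : ℕ) :
    ‖Lp z h n‖ ≤ n * (‖z‖ + ‖h‖ + 1) ^ n * ‖h‖ := by
  have hb : (1 : ℝ) ≤ ‖z‖ + ‖h‖ + 1 := by linarith [norm_nonneg z, norm_nonneg h]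
  calc ‖Lp z h n‖ ≤ ∑ i ∈ Finset.range n, ‖z ^ i * h * z ^ (n - 1 - i)‖ :=
        norm_sum_le _ _
    _ ≤ ∑ _i ∈ Finset.range n, (‖z‖ + ‖h‖ + 1) ^ n * ‖h‖ := by
        refine Finset.sum_le_sum fun i hi => ?_
        rw [Finset.mem_range] at hi
        rw [norm_mul, norm_mul, norm_pow, norm_pow]
        have h1 : ‖z‖ ^ i * ‖h‖ * ‖z‖ ^ (n - 1 - i) = ‖z‖ ^ (i + (n - 1 - i)) * ‖h‖ := by
          rw [pow_add]; ring
        rw [h1]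
        have h2 : ‖z‖ ^ (i + (n - 1 - i)) ≤ (‖z‖ + ‖h‖ + 1) ^ n := by
          calc ‖z‖ ^ (i + (n - 1 - i)) ≤ (‖z‖ + ‖h‖ + 1) ^ (i + (n - 1 - i)) :=
                pow_le_pow_left₀ (norm_nonneg z) (by linarith [norm_nonneg h]) _
            _ ≤ (‖z‖ + ‖h‖ + 1) ^ n := pow_le_pow_right₀ hb (by omega)
        exact mul_le_mul_of_nonneg_right h2 (norm_nonneg h)
    _ = n * (‖z‖ + ‖h‖ + 1) ^ n * ‖h‖ := by
        rw [Finset.sum_const, Finset.card_range, nsmul_eq_mul]; ring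

lemma E_norm_le (z h : ℍ[ℝ]) (n : ℕ) :
    ‖(z + h) ^ n - z ^ n - Lp z h n‖ ≤ (n : ℝ) ^ 2 * (‖z‖ + ‖h‖ + 1) ^ n * ‖h‖ ^ 2 := by
  induction n with
  | zero => simp [Lp]
  | succ n ih =>
    have hb1 : (1 : ℝ) ≤ ‖z‖ + ‖h‖ + 1 := by linarith [norm_nonneg z, norm_nonneg h]
    set b := ‖z‖ + ‖h‖ + 1 with hbdef
    have hbn : (0 : ℝ) ≤ b ^ n := by positivity
    have key : (z + h) ^ (n + 1) - z ^ (n + 1) - Lp z h (n + 1)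
        = ((z + h) ^ n - z ^ n - Lp z h n) * (z + h) + Lp z h n * h := by
      rw [Lp_succ, pow_succ, pow_succ]; noncomm_ring
    rw [key]
    have hzh : ‖z + h‖ ≤ b := by
      have := norm_add_le z h; rw [hbdef]; linarith
    have h1 : ‖((z + h) ^ n - z ^ n - Lp z h n) * (z + h)‖
        ≤ ((n : ℝ) ^ 2 * b ^ n * ‖h‖ ^ 2) * b := by
      rw [norm_mul]
      exact mul_le_mul ih hzh (norm_nonneg _) (by positivity)
    have h2 : ‖Lp z h n * h‖ ≤ ((n : ℝ) * b ^ n * ‖h‖) * ‖h‖ := by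
      rw [norm_mul]
      exact mul_le_mul_of_nonneg_right (Lp_norm_le z h n) (norm_nonneg h)
    refine le_trans (norm_add_le _ _) (le_trans (add_le_add h1 h2) ?_)
    rw [pow_succ b n]
    push_cast
    nlinarith [norm_nonneg h, sq_nonneg ‖h‖, mul_nonneg hbn (sq_nonneg ‖h‖),
      mul_le_mul_of_nonneg_right hb1 (mul_nonneg (mul_nonneg (Nat.cast_nonneg n) hbn) (sq_nonneg ‖h‖))]

lemma summable_n1 (r : ℝ) (hr : 0 ≤ r) :
    Summable fun n : ℕ => (n : ℝ) * r ^ n / (n.factorial : ℝ) := by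
  refine Summable.of_nonneg_of_le (fun n => by positivity) (fun n => ?_)
    (Real.summable_pow_div_factorial (2 * r))
  rw [mul_pow]
  have h1 : (n : ℝ) ≤ 2 ^ n := by exact_mod_cast (Nat.lt_two_pow_self (n := n)).le
  have h2 : (0 : ℝ) < n.factorial := by positivity
  rw [div_le_div_iff₀ h2 h2]
  have : (n : ℝ) * r ^ n ≤ 2 ^ n * r ^ n :=
    mul_le_mul_of_nonneg_right h1 (by positivity)
  nlinarith
lemma summable_n2 (r : ℝ) (hr : 0 ≤ r) :
    Summable fun n : ℕ => (n : ℝ) ^ 2 * r ^ n / (n.factorial : ℝ) := by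
  refine Summable.of_nonneg_of_le (fun n => by positivity) (fun n => ?_)
    (Real.summable_pow_div_factorial (4 * r))
  rw [mul_pow]
  have h1 : (n : ℝ) ≤ 2 ^ n := by exact_mod_cast (Nat.lt_two_pow_self (n := n)).le
  have h12 : (n : ℝ) ^ 2 ≤ 4 ^ n := by
    have : ((2 : ℝ) ^ n) ^ 2 = 4 ^ n := by
      rw [← pow_mul, mul_comm, pow_mul]; norm_num
    nlinarith [Nat.cast_nonneg (α := ℝ) n]
  have h2 : (0 : ℝ) < n.factorial := by positivity
  rw [div_le_div_iff₀ h2 h2]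
  have : (n : ℝ) ^ 2 * r ^ n ≤ 4 ^ n * r ^ n :=
    mul_le_mul_of_nonneg_right h12 (by positivity)
  nlinarith

lemma summable_F (r : ℝ) (hr : 1 ≤ r) :
    Summable (fun p : ℕ × ℕ => if p.2 < p.1 then |c p.1| * r ^ p.1 else 0) := by
  rw [summable_prod_of_nonneg (fun p => by dsimp only; split <;> positivity)]
  constructor
  · intro n
    exact summable_of_ne_finset_zero (s := Finset.range n)
      (fun i hi => if_neg (by simpa using hi))
  · have hsum : ∀ n : ℕ, (∑' i : ℕ, if i < n then |c n| * r ^ n else 0)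
        = (n : ℝ) * (|c n| * r ^ n) := by
      intro n
      rw [tsum_eq_sum (s := Finset.range n) (fun i hi => if_neg (by simpa using hi))]
      rw [Finset.sum_congr rfl (fun i hi => if_pos (Finset.mem_range.mp hi)),
        Finset.sum_const, Finset.card_range, nsmul_eq_mul]
    simp only [hsum]
    refine Summable.of_nonneg_of_le (fun n => by positivity) (fun n => ?_)
      (summable_n1 (2 * r) (by linarith))
    calc (n : ℝ) * (|c n| * r ^ n) ≤ (n : ℝ) * ((1 / (n.factorial : ℝ)) * (2 * r) ^ n) := by
          refine mul_le_mul_of_nonneg_left ?_ (Nat.cast_nonneg n)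
          refine mul_le_mul (abs_c_le n) ?_ (by positivity) (by positivity)
          exact pow_le_pow_left₀ (by linarith) (by linarith) n
      _ = (n : ℝ) * (2 * r) ^ n / (n.factorial : ℝ) := by ring

/-- the index pairing -/
noncomputable def ee : ℕ ≃ ℕ × ℕ := (Denumerable.eqv (ℕ × ℕ)).symm

/-- the `A` sequence -/
noncomputable def Af (z : ℍ[ℝ]) (k : ℕ) : ℍ[ℝ] :=
  if (ee k).2 < (ee k).1 then c (ee k).1 • z ^ (ee k).2 else 0

/-- the `B` sequence -/
noncomputable def Bf (z : ℍ[ℝ]) (k : ℕ) : ℍ[ℝ] :=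
  if (ee k).2 < (ee k).1 then z ^ ((ee k).1 - 1 - (ee k).2) else 0

lemma norm_term_le (z h : ℍ[ℝ]) (p : ℕ × ℕ) (hp : p.2 < p.1) :
    ‖(c p.1 • z ^ p.2) * h * z ^ (p.1 - 1 - p.2)‖
      ≤ (|c p.1| * (‖z‖ + 1) ^ p.1) * ‖h‖ := by
  rw [norm_mul, norm_mul, norm_smul, norm_pow, norm_pow, Real.norm_eq_abs]
  have hz : ‖z‖ ^ p.2 * ‖z‖ ^ (p.1 - 1 - p.2) ≤ (‖z‖ + 1) ^ p.1 := by
    rw [← pow_add]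
    calc ‖z‖ ^ (p.2 + (p.1 - 1 - p.2)) ≤ (‖z‖ + 1) ^ (p.2 + (p.1 - 1 - p.2)) :=
          pow_le_pow_left₀ (norm_nonneg z) (by linarith [norm_nonneg z]) _
      _ ≤ (‖z‖ + 1) ^ p.1 :=
          pow_le_pow_right₀ (by linarith [norm_nonneg z]) (by omega)
  calc |c p.1| * ‖z‖ ^ p.2 * ‖h‖ * ‖z‖ ^ (p.1 - 1 - p.2)
      = (|c p.1| * ‖h‖) * (‖z‖ ^ p.2 * ‖z‖ ^ (p.1 - 1 - p.2)) := by ring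
    _ ≤ (|c p.1| * ‖h‖) * (‖z‖ + 1) ^ p.1 :=
        mul_le_mul_of_nonneg_left hz (by positivity)
    _ = (|c p.1| * (‖z‖ + 1) ^ p.1) * ‖h‖ := by ring

lemma key_tsum (z h : ℍ[ℝ]) :
    (∑' k, Af z k * h * Bf z k) = ∑' n, c n • Lp z h n := by
  have hr : (1 : ℝ) ≤ ‖z‖ + 1 := by linarith [norm_nonneg z]
  set g : ℕ × ℕ → ℍ[ℝ] :=
    fun p => if p.2 < p.1 then (c p.1 • z ^ p.2) * h * z ^ (p.1 - 1 - p.2) else 0 with hg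
  have hgs : Summable g := by
    refine Summable.of_norm_bounded ((summable_F (‖z‖ + 1) hr).mul_right ‖h‖) fun p => ?_
    by_cases hp : p.2 < p.1
    · rw [hg]; dsimp only; rw [if_pos hp, if_pos hp]
      exact norm_term_le z h p hp
    · rw [hg]; dsimp only; rw [if_neg hp, if_neg hp, norm_zero, zero_mul]
  have hfun : (fun k => Af z k * h * Bf z k) = fun k => g (ee k) := by
    funext k
    rw [Af, Bf, hg]
    by_cases hk : (ee k).2 < (ee k).1
    · rw [if_pos hk, if_pos hk]; dsimp only; rw [if_pos hk]
    · rw [if_neg hk, if_neg hk]; dsimp only; rw [if_neg hk, zero_mul, mul_zero]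
  rw [hfun, Equiv.tsum_eq ee g]
  rw [Summable.tsum_prod' hgs (fun n => summable_of_ne_finset_zero (s := Finset.range n)
    (fun i hi => by rw [hg]; exact if_neg (by simpa using hi)))]
  refine tsum_congr fun n => ?_
  rw [tsum_eq_sum (s := Finset.range n)
    (fun i hi => by rw [hg]; exact if_neg (by simpa using hi))]
  rw [Lp, Finset.smul_sum]
  refine Finset.sum_congr rfl fun i hi => ?_
  rw [Finset.mem_range] at hi
  rw [hg]; dsimp only; rw [if_pos hi, smul_mul_assoc, smul_mul_assoc]

lemma deriv_tsum (z : ℍ[ℝ]) :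
    (∑' n : ℕ, ((n : ℝ) * c n) • z ^ (n - 1)) = -qsin z := by
  have h := Function.Injective.tsum_eq (g := fun m : ℕ => 2 * m + 2)
      (f := fun n : ℕ => ((n : ℝ) * c n) • z ^ (n - 1)) (fun a b hab => by dsimp only at hab; omega) ?_
  · rw [← h, qsin, ← tsum_neg]
    refine tsum_congr fun m => ?_
    have hc : c (2 * m + 2) = (-1 : ℝ) ^ (m + 1) / (2 * m + 2).factorial := by
      rw [show 2 * m + 2 = 2 * (m + 1) by ring, c_two_mul, show 2 * (m + 1) = 2 * m + 2 by ring]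
    have hexp : 2 * m + 2 - 1 = 2 * m + 1 := rfl
    rw [hc, hexp, ← neg_smul]
    congr 1
    have hfac : ((2 * m + 2).factorial : ℝ) = (2 * m + 2) * (2 * m + 1).factorial := by
      rw [show 2 * m + 2 = (2 * m + 1) + 1 from rfl, Nat.factorial_succ]
      push_cast; ring
    have h1 : ((2 * m + 1).factorial : ℝ) ≠ 0 := by positivity
    rw [hfac, pow_succ]
    field_simp
    push_cast; ring
  · intro n hn
    rcases Nat.even_or_odd n with ⟨m, hm⟩ | ⟨m, hm⟩
    · rcases Nat.eq_zero_or_pos n with h0 | h0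
      · exfalso; apply hn; show ((n : ℝ) * c n) • z ^ (n - 1) = 0; rw [h0]; simp
      · exact ⟨m - 1, by dsimp only; omega⟩
    · exfalso; apply hn
      show ((n : ℝ) * c n) • z ^ (n - 1) = 0
      rw [c_odd (by omega), mul_zero, zero_smul]

end HQC

open HQC in
/-- The quaternionic cosine is H-differentiable at every point with H-derivative minus the sine. -/
theorem hDiffAt_qcos (z : ℍ[ℝ]) : HDiffAt qcos z (-qsin z) := by
  classical
  refine ⟨Af z, Bf z, ?_, ?_, ?_⟩
  · -- summability of ‖A‖ * ‖B‖
    have hr : (1 : ℝ) ≤ ‖z‖ + 1 := by linarith [norm_nonneg z]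
    have hS : Summable ((fun p : ℕ × ℕ => if p.2 < p.1 then |c p.1| * (‖z‖ + 1) ^ p.1 else 0) ∘ ee) :=
      (Equiv.summable_iff ee).mpr (summable_F (‖z‖ + 1) hr)
    refine Summable.of_nonneg_of_le (fun k => by positivity) (fun k => ?_) hS
    rw [Af, Bf, Function.comp]
    by_cases hk : (ee k).2 < (ee k).1
    · rw [if_pos hk, if_pos hk, if_pos hk, norm_smul, norm_pow, norm_pow, Real.norm_eq_abs]
      have hz : ‖z‖ ^ (ee k).2 * ‖z‖ ^ ((ee k).1 - 1 - (ee k).2) ≤ (‖z‖ + 1) ^ (ee k).1 := by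
        rw [← pow_add]
        calc ‖z‖ ^ ((ee k).2 + ((ee k).1 - 1 - (ee k).2))
            ≤ (‖z‖ + 1) ^ ((ee k).2 + ((ee k).1 - 1 - (ee k).2)) :=
              pow_le_pow_left₀ (norm_nonneg z) (by linarith [norm_nonneg z]) _
          _ ≤ (‖z‖ + 1) ^ (ee k).1 := pow_le_pow_right₀ hr (by omega)
      calc |c (ee k).1| * ‖z‖ ^ (ee k).2 * ‖z‖ ^ ((ee k).1 - 1 - (ee k).2)
          = |c (ee k).1| * (‖z‖ ^ (ee k).2 * ‖z‖ ^ ((ee k).1 - 1 - (ee k).2)) := by ring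
        _ ≤ |c (ee k).1| * (‖z‖ + 1) ^ (ee k).1 :=
            mul_le_mul_of_nonneg_left hz (abs_nonneg _)
    · rw [if_neg hk, if_neg hk, if_neg hk, norm_zero, zero_mul]
  · -- the little-o condition
    set M : ℝ := ∑' n : ℕ, (n : ℝ) ^ 2 * (‖z‖ + 2) ^ n / (n.factorial : ℝ) with hM
    have hMs : Summable fun n : ℕ => (n : ℝ) ^ 2 * (‖z‖ + 2) ^ n / (n.factorial : ℝ) :=
      summable_n2 (‖z‖ + 2) (by positivity)
    have hbound : ∀ h : ℍ[ℝ], ‖h‖ ≤ 1 →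
        ‖qcos (z + h) - qcos z - ∑' k, Af z k * h * Bf z k‖ ≤ M * ‖h‖ ^ 2 := by
      intro h hh1
      rw [key_tsum z h, qcos_eq, qcos_eq]
      have hzh : ‖z + h‖ ≤ ‖z‖ + 1 := le_trans (norm_add_le z h) (by linarith)
      have S1 : Summable fun n : ℕ => c n • (z + h) ^ n := by
        refine Summable.of_norm_bounded (Real.summable_pow_div_factorial (‖z‖ + 1)) fun n => ?_
        rw [norm_smul, norm_pow, Real.norm_eq_abs]
        calc |c n| * ‖z + h‖ ^ n ≤ (1 / (n.factorial : ℝ)) * (‖z‖ + 1) ^ n := by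
              refine mul_le_mul (abs_c_le n) (pow_le_pow_left₀ (norm_nonneg _) hzh n)
                (by positivity) (by positivity)
          _ = (‖z‖ + 1) ^ n / (n.factorial : ℝ) := by ring
      have S2 : Summable fun n : ℕ => c n • z ^ n := by
        refine Summable.of_norm_bounded (Real.summable_pow_div_factorial ‖z‖) fun n => ?_
        rw [norm_smul, norm_pow, Real.norm_eq_abs]
        calc |c n| * ‖z‖ ^ n ≤ (1 / (n.factorial : ℝ)) * ‖z‖ ^ n :=
              mul_le_mul_of_nonneg_right (abs_c_le n) (by positivity)
          _ = ‖z‖ ^ n / (n.factorial : ℝ) := by ring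
      have hb2 : ‖z‖ + ‖h‖ + 1 ≤ ‖z‖ + 2 := by linarith
      have hbpos : (0 : ℝ) ≤ ‖z‖ + ‖h‖ + 1 := by positivity
      have S3 : Summable fun n : ℕ => c n • Lp z h n := by
        refine Summable.of_norm_bounded ((summable_n1 (‖z‖ + 2) (by positivity)).mul_right ‖h‖)
          fun n => ?_
        rw [norm_smul, Real.norm_eq_abs]
        calc |c n| * ‖Lp z h n‖ ≤ (1 / (n.factorial : ℝ)) * ((n : ℝ) * (‖z‖ + 2) ^ n * ‖h‖) := by
              refine mul_le_mul (abs_c_le n) (le_trans (Lp_norm_le z h n) ?_)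
                (norm_nonneg _) (by positivity)
              refine mul_le_mul_of_nonneg_right ?_ (norm_nonneg h)
              exact mul_le_mul_of_nonneg_left
                (pow_le_pow_left₀ hbpos hb2 n) (Nat.cast_nonneg n)
          _ = ((n : ℝ) * (‖z‖ + 2) ^ n / (n.factorial : ℝ)) * ‖h‖ := by ring
      have hEsum : Summable fun n : ℕ => c n • ((z + h) ^ n - z ^ n - Lp z h n) := by
        have := (S1.sub S2).sub S3
        simpa [smul_sub] using this
      have heq : (∑' n, c n • (z + h) ^ n) - (∑' n, c n • z ^ n) - (∑' n, c n • Lp z h n)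
          = ∑' n, c n • ((z + h) ^ n - z ^ n - Lp z h n) := by
        rw [← Summable.tsum_sub S1 S2, ← Summable.tsum_sub (S1.sub S2) S3]
        refine tsum_congr fun n => ?_
        rw [smul_sub, smul_sub]
      rw [heq]
      have hnorm : ∀ n : ℕ, ‖c n • ((z + h) ^ n - z ^ n - Lp z h n)‖
          ≤ ((n : ℝ) ^ 2 * (‖z‖ + 2) ^ n / (n.factorial : ℝ)) * ‖h‖ ^ 2 := by
        intro n
        rw [norm_smul, Real.norm_eq_abs]
        calc |c n| * ‖(z + h) ^ n - z ^ n - Lp z h n‖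
            ≤ (1 / (n.factorial : ℝ)) * ((n : ℝ) ^ 2 * (‖z‖ + 2) ^ n * ‖h‖ ^ 2) := by
              refine mul_le_mul (abs_c_le n) (le_trans (E_norm_le z h n) ?_)
                (norm_nonneg _) (by positivity)
              refine mul_le_mul_of_nonneg_right ?_ (sq_nonneg ‖h‖)
              exact mul_le_mul_of_nonneg_left (pow_le_pow_left₀ hbpos hb2 n) (by positivity)
          _ = ((n : ℝ) ^ 2 * (‖z‖ + 2) ^ n / (n.factorial : ℝ)) * ‖h‖ ^ 2 := by ring
      calc ‖∑' n, c n • ((z + h) ^ n - z ^ n - Lp z h n)‖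
          ≤ ∑' n, ‖c n • ((z + h) ^ n - z ^ n - Lp z h n)‖ :=
            norm_tsum_le_tsum_norm (Summable.of_nonneg_of_le (fun n => norm_nonneg _)
              hnorm (hMs.mul_right (‖h‖ ^ 2)))
        _ ≤ ∑' n : ℕ, ((n : ℝ) ^ 2 * (‖z‖ + 2) ^ n / (n.factorial : ℝ)) * ‖h‖ ^ 2 :=
            Summable.tsum_le_tsum hnorm (Summable.of_nonneg_of_le (fun n => norm_nonneg _)
              hnorm (hMs.mul_right (‖h‖ ^ 2))) (hMs.mul_right (‖h‖ ^ 2))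
        _ = M * ‖h‖ ^ 2 := by rw [tsum_mul_right]
    have hM0 : 0 ≤ M := tsum_nonneg fun n => by positivity
    refine squeeze_zero' (g := fun h : ℍ[ℝ] => M * ‖h‖) ?_ ?_ ?_
    · exact Filter.Eventually.of_forall fun h => div_nonneg (norm_nonneg _) (norm_nonneg _)
    · have hsmall : ∀ᶠ h : ℍ[ℝ] in 𝓝[≠] (0 : ℍ[ℝ]), ‖h‖ ≤ 1 := by
        refine Filter.Eventually.filter_mono nhdsWithin_le_nhds ?_
        filter_upwards [Metric.closedBall_mem_nhds (0 : ℍ[ℝ]) one_pos] with h hh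
        simpa [Metric.mem_closedBall, dist_zero_right] using hh
      have hne : ∀ᶠ h : ℍ[ℝ] in 𝓝[≠] (0 : ℍ[ℝ]), h ≠ 0 :=
        eventually_mem_nhdsWithin.mono fun h hh => hh
      filter_upwards [hsmall, hne] with h hh1 hne
      have hpos : (0 : ℝ) < ‖h‖ := norm_pos_iff.mpr hne
      rw [div_le_iff₀ hpos]
      calc ‖qcos (z + h) - qcos z - ∑' k, Af z k * h * Bf z k‖ ≤ M * ‖h‖ ^ 2 :=
            hbound h hh1
        _ = M * ‖h‖ * ‖h‖ := by ring
    · have : Filter.Tendsto (fun h : ℍ[ℝ] => M * ‖h‖) (𝓝 (0 : ℍ[ℝ])) (𝓝 0) := by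
        have := tendsto_norm_zero (E := ℍ[ℝ]).const_mul M
        simpa using this
      exact this.mono_left nhdsWithin_le_nhds
  · -- the value of the derivative
    have h1 : (fun k => Af z k * Bf z k) = fun k => Af z k * (1 : ℍ[ℝ]) * Bf z k := by
      funext k; rw [mul_one]
    rw [h1, key_tsum z 1, ← deriv_tsum z]
    refine tsum_congr fun n => ?_
    have hL1 : Lp z (1 : ℍ[ℝ]) n = n • z ^ (n - 1) := by
      rw [Lp]
      rw [Finset.sum_congr rfl (fun i hi => ?_), Finset.sum_const, Finset.card_range]
      rw [Finset.mem_range] at hi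
      rw [mul_one, ← pow_add]
      congr 1
      omega
    rw [hL1, ← Nat.cast_smul_eq_nsmul ℝ n (z ^ (n - 1)), smul_smul, mul_comm]
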